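/- arXiv:math/0410362 — 4 statements merged into one kernel-verified Lean document; each statement's English description precedes it below -/
import Mathlib

section
/- Let n ≥ 1, let a ∈ ℂⁿ, and let φ be a complex-valued function on ℂⁿ × ℂⁿ that is analytic at the point (a, conj(a)) (i.e. it agrees with a convergent power series on a neighborhood of that point). If φ(z, conj(z)) = 0 for all z in some neighborhood of a in ℂⁿ, then φ vanishes identically on some neighborhood of (a, conj(a)) in ℂⁿ × ℂⁿ. -/
open Filter

/-- Composing a power series expansion with a norm-nonincreasing continuous linear map. -/
theorem hasFPowerSeriesOnBall_comp_clm_aux {𝕜 : Type*} [NontriviallyNormedField 𝕜]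
    {E F G : Type*} [NormedAddCommGroup E] [NormedSpace 𝕜 E]
    [NormedAddCommGroup F] [NormedSpace 𝕜 F] [NormedAddCommGroup G] [NormedSpace 𝕜 G]
    {f : E → F} {p : FormalMultilinearSeries 𝕜 E F} {x : E} {r : ENNReal}
    (hf : HasFPowerSeriesOnBall f p x r) (u : G →L[𝕜] E) (hu : ∀ y, ‖u y‖ ≤ ‖y‖) :
    HasFPowerSeriesOnBall (fun y => f (x + u y)) (p.compContinuousLinearMap u) 0 r := by
  have hu1 : ‖u‖ ≤ 1 := u.opNorm_le_bound zero_le_one (by simpa using hu)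
  have hq : ∀ k, ‖p.compContinuousLinearMap u k‖ ≤ ‖p k‖ := by
    intro k
    refine le_trans (ContinuousMultilinearMap.norm_compContinuousLinearMap_le _ _) ?_
    have : (∏ _i : Fin k, ‖u‖) ≤ 1 :=
      Finset.prod_le_one (fun _ _ => norm_nonneg u) (fun _ _ => hu1)
    calc ‖p k‖ * ∏ _i : Fin k, ‖u‖ ≤ ‖p k‖ * 1 := by
          exact mul_le_mul_of_nonneg_left this (norm_nonneg _)
      _ = ‖p k‖ := mul_one _
  refine ⟨hf.r_le.trans (FormalMultilinearSeries.radius_le_of_le hq), hf.r_pos, ?_⟩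
  intro y hy
  have h1 : u y ∈ Metric.eball (0 : E) r := by
    simp only [Metric.mem_eball, edist_zero_right] at hy ⊢
    refine lt_of_le_of_lt ?_ hy
    exact enorm_le_iff_norm_le.2 (hu y)
  have := hf.hasSum h1
  simpa [Function.comp_def] using this

/-- If `φ : ℂⁿ × ℂⁿ → ℂ` is analytic at `(a, conj a)` and vanishes on the totally real
diagonal `{(z, conj z)}` for `z` near `a`, then `φ` vanishes identically on a neighborhood
of `(a, conj a)`. -/
theorem vanishing_on_diagonal_of_analyticAt
    (n : ℕ) (hn : 1 ≤ n) (a : Fin n → ℂ)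
    (φ : (Fin n → ℂ) × (Fin n → ℂ) → ℂ)
    (hφ : AnalyticAt ℂ φ (a, fun i => (starRingEnd ℂ) (a i)))
    (h0 : ∀ᶠ z in nhds a, φ (z, fun i => (starRingEnd ℂ) (z i)) = 0) :
    ∀ᶠ p in nhds ((a, fun i => (starRingEnd ℂ) (a i)) :
        (Fin n → ℂ) × (Fin n → ℂ)), φ p = 0 := by
  classical
  set x₀ : (Fin n → ℂ) × (Fin n → ℂ) := (a, fun i => (starRingEnd ℂ) (a i)) with hx₀
  obtain ⟨p, hp⟩ := hφ
  obtain ⟨r, hpr⟩ := hp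
  -- the real-linear "diagonal" map z ↦ (z, conj z)
  set c : (Fin n → ℂ) →L[ℝ] (Fin n → ℂ) :=
    ContinuousLinearMap.pi
      (fun i => (Complex.conjCLE.toContinuousLinearMap).comp (ContinuousLinearMap.proj i)) with hc
  have hc_apply : ∀ (z : Fin n → ℂ) (i : Fin n), c z i = (starRingEnd ℂ) (z i) := fun z i => rfl
  set d : (Fin n → ℂ) →L[ℝ] ((Fin n → ℂ) × (Fin n → ℂ)) := (ContinuousLinearMap.id ℝ (Fin n → ℂ)).prod c with hd_def
  have hd_apply : ∀ z : Fin n → ℂ, d z = (z, fun i => (starRingEnd ℂ) (z i)) := by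
    intro z
    refine Prod.ext rfl ?_
    funext i
    exact hc_apply z i
  have hcnorm : ∀ z : Fin n → ℂ, ‖c z‖ ≤ ‖z‖ := by
    intro z
    refine (pi_norm_le_iff_of_nonneg (norm_nonneg z)).2 (fun i => ?_)
    rw [hc_apply]
    calc ‖(starRingEnd ℂ) (z i)‖ = ‖z i‖ := by simp
      _ ≤ ‖z‖ := norm_le_pi_norm z i
  have hd : ∀ z : Fin n → ℂ, ‖d z‖ ≤ ‖z‖ := by
    intro z
    rw [hd_def]
    simp only [ContinuousLinearMap.prod_apply, Prod.norm_def, ContinuousLinearMap.id_apply]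
    exact max_le le_rfl (hcnorm z)
  -- power series of the composite over ℝ
  have hcomp := hasFPowerSeriesOnBall_comp_clm_aux
    (hpr.restrictScalars (𝕜 := ℝ)) d hd
  -- the composite vanishes near 0
  have htr : Filter.Tendsto (fun y : Fin n → ℂ => a + y) (nhds (0 : Fin n → ℂ)) (nhds a) := by
    have : Filter.Tendsto (fun y : Fin n → ℂ => a + y) (nhds (0 : Fin n → ℂ)) (nhds (a + 0)) :=
      (continuous_const.add continuous_id).tendsto _
    simpa using this
  have hzero : (fun y : Fin n → ℂ => φ (x₀ + d y)) =ᶠ[nhds (0 : Fin n → ℂ)] 0 := by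
    filter_upwards [htr.eventually h0] with y hy
    have hx : x₀ + d y = (a + y, fun i => (starRingEnd ℂ) ((a + y) i)) := by
      rw [hd_apply]
      refine Prod.ext rfl ?_
      funext i
      simp [hx₀, map_add]
    simpa [hx] using hy
  have h0' : HasFPowerSeriesAt (0 : (Fin n → ℂ) → ℂ)
      ((p.restrictScalars ℝ).compContinuousLinearMap d) 0 :=
    hcomp.hasFPowerSeriesAt.congr hzero
  have hdiag : ∀ (k : ℕ) (y : Fin n → ℂ), p k (fun _ => d y) = 0 := by
    intro k y
    have := h0'.apply_eq_zero k y
    simpa [FormalMultilinearSeries.compContinuousLinearMap,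
      FormalMultilinearSeries.restrictScalars, Function.comp] using this
  -- upgrade to all points of X by one-variable analytic continuation
  have hall : ∀ (k : ℕ) (w : (Fin n → ℂ) × (Fin n → ℂ)), p k (fun _ => w) = 0 := by
    intro k w
    set u : Fin n → ℂ := fun i => (w.1 i + (starRingEnd ℂ) (w.2 i)) / 2 with hu
    set v : Fin n → ℂ := fun i => (w.1 i - (starRingEnd ℂ) (w.2 i)) / (2 * Complex.I) with hv
    set g : ℂ → ℂ := fun t => p k (fun _ => d u + t • d v) with hg
    have hgana : AnalyticOnNhd ℂ g Set.univ := by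
      intro t _
      have h1 : AnalyticAt ℂ (fun t : ℂ => (fun _ : Fin k => d u + t • d v)) t := by
        apply AnalyticAt.pi
        intro i
        exact analyticAt_const.add ((analyticAt_id).smul analyticAt_const)
      exact (ContinuousMultilinearMap.analyticAt (p k)).comp h1
    have hre : ∀ s : ℝ, g (s : ℂ) = 0 := by
      intro s
      have hsm : (s : ℂ) • d v = d (s • v) := by
        rw [map_smul]
        rw [← algebraMap_smul ℂ s (d v)]
        norm_num
      have : d u + (s : ℂ) • d v = d (u + s • v) := by
        rw [map_add, hsm]
      rw [hg]
      simp only [this]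
      exact hdiag k _
    have hcoe : Filter.Tendsto (fun s : ℝ => (s : ℂ))
        (nhdsWithin (0 : ℝ) {(0 : ℝ)}ᶜ) (nhdsWithin (0 : ℂ) {(0 : ℂ)}ᶜ) := by
      refine tendsto_nhdsWithin_iff.2 ⟨?_, ?_⟩
      · have : Filter.Tendsto (fun s : ℝ => (s : ℂ)) (nhds (0 : ℝ)) (nhds ((0 : ℝ) : ℂ)) :=
          Complex.continuous_ofReal.tendsto 0
        simpa using this.mono_left nhdsWithin_le_nhds
      · filter_upwards [self_mem_nhdsWithin] with s hs
        simpa using hs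
    have hfreq : ∃ᶠ t in nhdsWithin (0 : ℂ) {(0 : ℂ)}ᶜ, g t = 0 := by
      have : ∃ᶠ s in nhdsWithin (0 : ℝ) {(0 : ℝ)}ᶜ, g ((s : ℝ) : ℂ) = 0 :=
        Filter.Eventually.frequently (Filter.Eventually.of_forall hre)
      exact hcoe.frequently this
    have hEq := hgana.eqOn_zero_of_preconnected_of_frequently_eq_zero
      isPreconnected_univ (Set.mem_univ (0 : ℂ)) hfreq
    have hI : g Complex.I = 0 := hEq (Set.mem_univ _)
    have hw : d u + Complex.I • d v = w := by
      refine Prod.ext ?_ ?_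
      · funext i
        rw [hd_apply, hd_apply]
        simp only [Prod.fst_add, Prod.smul_fst, Pi.add_apply, Pi.smul_apply, hu, hv]
        have h2i : (2 : ℂ) * Complex.I ≠ 0 := by
          simp [Complex.I_ne_zero]
        field_simp
        ring_nf
        simp only [mul_inv_cancel_right₀ Complex.I_ne_zero]
        ring
      · funext i
        rw [hd_apply, hd_apply]
        simp only [Prod.snd_add, Prod.smul_snd, Pi.add_apply, Pi.smul_apply, hu, hv]
        rw [map_div₀, map_div₀]
        simp only [map_add, map_sub, map_mul, map_ofNat, Complex.conj_I, Complex.conj_conj]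
        have h2i : (2 : ℂ) * -Complex.I ≠ 0 := by
          simp [Complex.I_ne_zero]
        field_simp
        ring_nf
        simp only [mul_inv_cancel_right₀ Complex.I_ne_zero]
        ring
    have hI' : p k (fun _ : Fin k => d u + Complex.I • d v) = 0 := hI
    rwa [hw] at hI'
  -- conclude
  have hball : EMetric.ball x₀ r ∈ nhds x₀ := EMetric.ball_mem_nhds _ hpr.r_pos
  filter_upwards [hball] with z hz
  have hsum := hpr.hasSum_sub hz
  have : HasSum (fun _ : ℕ => (0 : ℂ)) (φ z) := by
    have e : (fun k => (p k) fun _ => z - x₀) = fun _ => (0 : ℂ) := funext fun k => hall k _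
    rw [e] at hsum
    exact hsum
  simpa using this.unique hasSum_zero
end

section
/- Let n ≥ 1 and let U ⊆ ℂⁿ be a connected open set, and set Ū := {conj(z) : z ∈ U}. If φ : ℂⁿ × ℂⁿ → ℂ is holomorphic on the open set U × Ū (i.e. complex differentiable at every point of U × Ū) and φ(z, conj(z)) = 0 for every z ∈ U, then φ(z, w) = 0 for every (z, w) ∈ U × Ū. -/
open Metric Filter Function

private lemma oneD_of_eventually {f : ℂ → ℂ} {r : ℝ} (hr : 0 < r)
    (hf : DifferentiableOn ℂ f (ball 0 r))
    (h0 : f =ᶠ[nhds 0] 0) : Set.EqOn f 0 (ball 0 r) :=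
  (hf.analyticOnNhd isOpen_ball).eqOn_zero_of_preconnected_of_eventuallyEq_zero
    (convex_ball _ _).isPreconnected (mem_ball_self hr) h0

private lemma oneD_of_real {f : ℂ → ℂ} {r : ℝ} (hr : 0 < r)
    (hf : DifferentiableOn ℂ f (ball 0 r))
    (h0 : ∀ t : ℝ, (t : ℂ) ∈ ball (0:ℂ) r → f t = 0) : Set.EqOn f 0 (ball 0 r) := by
  apply (hf.analyticOnNhd isOpen_ball).eqOn_zero_of_preconnected_of_frequently_eq_zero
    (convex_ball _ _).isPreconnected (mem_ball_self hr)
  have h1 : Filter.Tendsto (fun t : ℝ => (t : ℂ)) (nhdsWithin 0 {0}ᶜ) (nhdsWithin 0 {0}ᶜ) := by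
    rw [tendsto_nhdsWithin_iff]
    constructor
    · exact (Complex.continuous_ofReal.tendsto 0).mono_left nhdsWithin_le_nhds |>.congr (by simp)
        |>.mono_right (le_of_eq (by simp))
    · filter_upwards [self_mem_nhdsWithin] with t ht
      simpa using ht
  have h2 : ∀ᶠ t : ℝ in nhdsWithin 0 {0}ᶜ, f t = 0 := by
    have : ∀ᶠ t : ℝ in nhds 0, f t = 0 := by
      filter_upwards [Metric.ball_mem_nhds (0:ℝ) hr] with t ht
      apply h0
      simpa [Complex.norm_real] using mem_ball_zero_iff.1 ht
    exact this.filter_mono nhdsWithin_le_nhds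
  exact h1.frequently h2.frequently

section Polydisc
variable {ι : Type*} [Fintype ι] [DecidableEq ι]

private lemma update_diffOn {g : (ι → ℂ) → ℂ} {r : ℝ}
    (hg : DifferentiableOn ℂ g {x | ∀ i, x i ∈ ball (0:ℂ) r})
    {x : ι → ℂ} (hx : ∀ i, x i ∈ ball (0:ℂ) r) (a : ι) :
    DifferentiableOn ℂ (fun t => g (Function.update x a t)) (ball (0:ℂ) r) := by
  apply hg.comp
  · apply Differentiable.differentiableOn
    have : Differentiable ℂ (fun t : ℂ => Function.update x a t) := by
      rw [differentiable_pi]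
      intro i
      simp only [Function.update_apply]
      by_cases h : i = a <;> simp [h, differentiable_const, differentiable_fun_id]
    exact this
  · intro t ht i
    rcases eq_or_ne i a with rfl | hne
    · simpa using ht
    · rw [Function.update_of_ne hne]; exact hx i

private lemma polydisc_zero_of_real {g : (ι → ℂ) → ℂ} {r : ℝ} (hr : 0 < r)
    (hg : DifferentiableOn ℂ g {x | ∀ i, x i ∈ ball (0:ℂ) r})
    (h0 : ∀ x : ι → ℂ, (∀ i, x i ∈ ball (0:ℂ) r) → (∀ i, (x i).im = 0) → g x = 0) :
    ∀ x : ι → ℂ, (∀ i, x i ∈ ball (0:ℂ) r) → g x = 0 := by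
  suffices H : ∀ s : Finset ι, ∀ x : ι → ℂ, (∀ i, x i ∈ ball (0:ℂ) r) →
      (∀ i ∉ s, (x i).im = 0) → g x = 0 by
    intro x hx
    exact H Finset.univ x hx (fun i hi => absurd (Finset.mem_univ i) hi)
  intro s
  induction s using Finset.induction_on with
  | empty => intro x hx h; exact h0 x hx fun i => h i (Finset.notMem_empty i)
  | @insert a s ha IH =>
    intro x hx h
    have hmaps : ∀ t ∈ ball (0:ℂ) r, ∀ i, Function.update x a t i ∈ ball (0:ℂ) r := by
      intro t ht i
      rcases eq_or_ne i a with rfl | hne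
      · simpa using ht
      · rw [Function.update_of_ne hne]; exact hx i
    have key := oneD_of_real hr (update_diffOn hg hx a) ?_ (hx a)
    · simpa [Function.update_eq_self] using key
    · intro t ht
      apply IH (Function.update x a t) (hmaps t ht)
      intro i hi
      rcases eq_or_ne i a with rfl | hne
      · simp
      · rw [Function.update_of_ne hne]
        exact h i (by simp [Finset.mem_insert, hne, hi])

private lemma polydisc_zero_of_small {g : (ι → ℂ) → ℂ} {r ε : ℝ} (hr : 0 < r) (hε : 0 < ε)
    (hg : DifferentiableOn ℂ g {x | ∀ i, x i ∈ ball (0:ℂ) r})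
    (h0 : ∀ x : ι → ℂ, (∀ i, x i ∈ ball (0:ℂ) ε) → g x = 0) :
    ∀ x : ι → ℂ, (∀ i, x i ∈ ball (0:ℂ) r) → g x = 0 := by
  rcases le_or_gt r ε with hle | hlt
  · intro x hx
    apply h0 x
    intro i
    exact mem_ball_zero_iff.2 (lt_of_lt_of_le (mem_ball_zero_iff.1 (hx i)) hle)
  suffices H : ∀ s : Finset ι, ∀ x : ι → ℂ, (∀ i, x i ∈ ball (0:ℂ) r) →
      (∀ i ∉ s, x i ∈ ball (0:ℂ) ε) → g x = 0 by
    intro x hx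
    exact H Finset.univ x hx (fun i hi => absurd (Finset.mem_univ i) hi)
  intro s
  induction s using Finset.induction_on with
  | empty => intro x hx h; exact h0 x fun i => h i (Finset.notMem_empty i)
  | @insert a s ha IH =>
    intro x hx h
    have hmaps : ∀ t ∈ ball (0:ℂ) r, ∀ i, Function.update x a t i ∈ ball (0:ℂ) r := by
      intro t ht i
      rcases eq_or_ne i a with rfl | hne
      · simpa using ht
      · rw [Function.update_of_ne hne]; exact hx i
    have key := oneD_of_eventually hr (update_diffOn hg hx a) ?_ (hx a)
    · simpa [Function.update_eq_self] using key
    · filter_upwards [Metric.ball_mem_nhds (0:ℂ) hε] with t ht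
      apply IH (Function.update x a t)
      · exact hmaps t (mem_ball_zero_iff.2 (lt_of_lt_of_le (mem_ball_zero_iff.1 ht) hlt.le))
      · intro i hi
        rcases eq_or_ne i a with rfl | hne
        · simpa using ht
        · rw [Function.update_of_ne hne]
          exact h i (by simp [Finset.mem_insert, hne, hi])

end Polydisc

/-- Propagation: a holomorphic function on a ball in `ℂⁿ × ℂⁿ` vanishing near the center
vanishes on the whole ball. -/
private lemma prop_ball {n : ℕ} {φ : (Fin n → ℂ) × (Fin n → ℂ) → ℂ}
    {q : (Fin n → ℂ) × (Fin n → ℂ)} {ρ : ℝ} (hρ : 0 < ρ)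
    (hφ : DifferentiableOn ℂ φ (ball q ρ)) (h0 : φ =ᶠ[nhds q] 0) :
    ∀ y ∈ ball q ρ, φ y = 0 := by
  obtain ⟨ε0, hε0, hz⟩ := Metric.eventually_nhds_iff_ball.1 h0
  set ε := min ε0 ρ with hεdef
  have hε : 0 < ε := lt_min hε0 hρ
  set e : (Fin n ⊕ Fin n → ℂ) → (Fin n → ℂ) × (Fin n → ℂ) :=
    fun x => (fun i => x (Sum.inl i), fun i => x (Sum.inr i)) with he
  have hmem : ∀ t : ℝ, 0 < t → ∀ x : Fin n ⊕ Fin n → ℂ,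
      (∀ j, x j ∈ ball (0:ℂ) t) → q + e x ∈ ball q t := by
    intro t ht x hx
    rw [mem_ball, dist_eq_norm, add_sub_cancel_left, Prod.norm_def]
    apply max_lt
    · rw [pi_norm_lt_iff ht]; intro i; simpa using mem_ball_zero_iff.1 (hx (Sum.inl i))
    · rw [pi_norm_lt_iff ht]; intro i; simpa using mem_ball_zero_iff.1 (hx (Sum.inr i))
  have hediff : Differentiable ℂ (fun x : Fin n ⊕ Fin n → ℂ => q + e x) := by
    apply (differentiable_const q).add
    apply Differentiable.prodMk <;>
      · rw [differentiable_pi]; intro i; exact differentiable_apply _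
  have hgdiff : DifferentiableOn ℂ (fun x => φ (q + e x)) {x | ∀ i, x i ∈ ball (0:ℂ) ρ} :=
    hφ.comp hediff.differentiableOn (fun x hx => hmem ρ hρ x hx)
  have hgz : ∀ x : Fin n ⊕ Fin n → ℂ, (∀ i, x i ∈ ball (0:ℂ) ρ) → φ (q + e x) = 0 := by
    apply polydisc_zero_of_small hρ hε hgdiff
    intro x hx
    apply hz
    have := hmem ε hε x hx
    exact mem_ball.2 (lt_of_lt_of_le (mem_ball.1 this) (min_le_left _ _))
  intro y hy
  set x : Fin n ⊕ Fin n → ℂ :=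
    Sum.elim (fun i => y.1 i - q.1 i) (fun i => y.2 i - q.2 i) with hxdef
  have hxball : ∀ j, x j ∈ ball (0:ℂ) ρ := by
    intro j
    rw [mem_ball_zero_iff]
    have h1 : dist y.1 q.1 < ρ := lt_of_le_of_lt (le_max_left _ _) (by rw [← Prod.dist_eq]; exact hy)
    have h2 : dist y.2 q.2 < ρ := lt_of_le_of_lt (le_max_right _ _) (by rw [← Prod.dist_eq]; exact hy)
    cases j with
    | inl i =>
      calc ‖y.1 i - q.1 i‖ = dist (y.1 i) (q.1 i) := (dist_eq_norm _ _).symm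
        _ ≤ dist y.1 q.1 := dist_le_pi_dist _ _ i
        _ < ρ := h1
    | inr i =>
      calc ‖y.2 i - q.2 i‖ = dist (y.2 i) (q.2 i) := (dist_eq_norm _ _).symm
        _ ≤ dist y.2 q.2 := dist_le_pi_dist _ _ i
        _ < ρ := h2
  have hqex : q + e x = y := by
    apply Prod.ext <;> · funext i; simp [he, hxdef]
  rw [← hqex]
  exact hgz x hxball

private lemma local_vanish {n : ℕ} {U : Set (Fin n → ℂ)} (hUopen : IsOpen U)
    {φ : (Fin n → ℂ) × (Fin n → ℂ) → ℂ}
    (hφ : DifferentiableOn ℂ φ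
      (U ×ˢ ((fun z : Fin n → ℂ => fun i => (starRingEnd ℂ) (z i)) '' U)))
    (h0 : ∀ z ∈ U, φ (z, fun i => (starRingEnd ℂ) (z i)) = 0)
    {z₀ : Fin n → ℂ} (hz₀ : z₀ ∈ U) :
    ∃ r > 0, ∀ p ∈ ball (z₀, fun i => (starRingEnd ℂ) (z₀ i)) r, φ p = 0 := by
  obtain ⟨ρ, hρ, hball⟩ := Metric.isOpen_iff.1 hUopen z₀ hz₀
  refine ⟨ρ/2, by positivity, ?_⟩
  set r := ρ/2 with hrdef
  have hr : 0 < r := by positivity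
  set m : (Fin n ⊕ Fin n → ℂ) → (Fin n → ℂ) × (Fin n → ℂ) := fun x =>
    (fun i => z₀ i + x (Sum.inl i) + Complex.I * x (Sum.inr i),
     fun i => (starRingEnd ℂ) (z₀ i) + x (Sum.inl i) - Complex.I * x (Sum.inr i)) with hm
  have hcoord : ∀ (a b : ℂ), ‖a‖ < r → ‖b‖ < r → ‖a + Complex.I * b‖ < ρ := by
    intro a b ha hb
    calc ‖a + Complex.I * b‖ ≤ ‖a‖ + ‖Complex.I * b‖ := norm_add_le _ _
      _ = ‖a‖ + ‖b‖ := by rw [norm_mul, Complex.norm_I, one_mul]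
      _ < r + r := add_lt_add ha hb
      _ = ρ := by rw [hrdef]; ring
  have hfst : ∀ x : Fin n ⊕ Fin n → ℂ, (∀ j, x j ∈ ball (0:ℂ) r) →
      (m x).1 ∈ ball z₀ ρ := by
    intro x hx
    rw [mem_ball, dist_pi_lt_iff hρ]
    intro i
    rw [dist_eq_norm]
    have : z₀ i + x (Sum.inl i) + Complex.I * x (Sum.inr i) - z₀ i
        = x (Sum.inl i) + Complex.I * x (Sum.inr i) := by ring
    rw [hm]; simp only []
    rw [this]
    exact hcoord _ _ (mem_ball_zero_iff.1 (hx _)) (mem_ball_zero_iff.1 (hx _))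
  have hsnd : ∀ x : Fin n ⊕ Fin n → ℂ, (∀ j, x j ∈ ball (0:ℂ) r) →
      (m x).2 ∈ ((fun z : Fin n → ℂ => fun i => (starRingEnd ℂ) (z i)) '' U) := by
    intro x hx
    refine ⟨fun i => (starRingEnd ℂ) ((m x).2 i), ?_, ?_⟩
    · apply hball
      rw [mem_ball, dist_pi_lt_iff hρ]
      intro i
      rw [dist_eq_norm]
      have heq : (starRingEnd ℂ) ((m x).2 i) - z₀ i
          = (starRingEnd ℂ) (x (Sum.inl i)) + Complex.I * (starRingEnd ℂ) (x (Sum.inr i)) := by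
        simp only [hm, map_add, map_sub, map_mul, Complex.conj_conj, Complex.conj_I]
        ring
      rw [heq]
      exact hcoord _ _ (by simpa using mem_ball_zero_iff.1 (hx _))
        (by simpa using mem_ball_zero_iff.1 (hx _))
    · funext i; simp only [Complex.conj_conj]
  have hmdiff : Differentiable ℂ m := by
    apply Differentiable.prodMk
    · rw [differentiable_pi]
      intro i
      exact ((differentiable_const _).add (differentiable_apply _)).add
        ((differentiable_const _).mul (differentiable_apply _))
    · rw [differentiable_pi]
      intro i
      exact ((differentiable_const _).add (differentiable_apply _)).sub
        ((differentiable_const _).mul (differentiable_apply _))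
  have hΨ : ∀ x : Fin n ⊕ Fin n → ℂ, (∀ j, x j ∈ ball (0:ℂ) r) → φ (m x) = 0 := by
    apply polydisc_zero_of_real hr
    · apply hφ.comp hmdiff.differentiableOn
      intro x hx
      exact Set.mem_prod.2 ⟨hball (hfst x hx), hsnd x hx⟩
    · intro x hx him
      have hreal : ∀ j, (starRingEnd ℂ) (x j) = x j :=
        fun j => Complex.conj_eq_iff_im.2 (him j)
      have hzU : (m x).1 ∈ U := hball (hfst x hx)
      have hconj : (m x).2 = fun i => (starRingEnd ℂ) ((m x).1 i) := by
        funext i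
        simp only [hm, map_add, map_mul, Complex.conj_I, hreal]
        ring
      calc φ (m x) = φ ((m x).1, fun i => (starRingEnd ℂ) ((m x).1 i)) := by
            rw [← hconj]
        _ = 0 := h0 _ hzU
  intro p hp
  set a : Fin n → ℂ := fun i => p.1 i - z₀ i with hadef
  set b : Fin n → ℂ := fun i => p.2 i - (starRingEnd ℂ) (z₀ i) with hbdef
  have ha : ∀ i, ‖a i‖ < r := by
    intro i
    have h1 : dist p.1 z₀ < r := by
      have := mem_ball.1 hp
      rw [Prod.dist_eq] at this
      exact lt_of_le_of_lt (le_max_left _ _) this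
    calc ‖a i‖ = dist (p.1 i) (z₀ i) := by rw [hadef, dist_eq_norm]
      _ ≤ dist p.1 z₀ := dist_le_pi_dist _ _ i
      _ < r := h1
  have hb : ∀ i, ‖b i‖ < r := by
    intro i
    have h2 : dist p.2 (fun i => (starRingEnd ℂ) (z₀ i)) < r := by
      have := mem_ball.1 hp
      rw [Prod.dist_eq] at this
      exact lt_of_le_of_lt (le_max_right _ _) this
    calc ‖b i‖ = dist (p.2 i) ((starRingEnd ℂ) (z₀ i)) := by rw [hbdef, dist_eq_norm]
      _ ≤ dist p.2 (fun i => (starRingEnd ℂ) (z₀ i)) := by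
            simpa using dist_le_pi_dist p.2 (fun i => (starRingEnd ℂ) (z₀ i)) i
      _ < r := h2
  set x : Fin n ⊕ Fin n → ℂ :=
    Sum.elim (fun i => (a i + b i) / 2) (fun i => (b i - a i) * Complex.I / 2) with hxdef
  have hxball : ∀ j, x j ∈ ball (0:ℂ) r := by
    intro j
    rw [mem_ball_zero_iff]
    cases j with
    | inl i =>
      calc ‖(a i + b i) / 2‖ = ‖a i + b i‖ / 2 := by
            rw [norm_div]; norm_num
        _ ≤ (‖a i‖ + ‖b i‖) / 2 := by gcongr; exact norm_add_le _ _
        _ < (r + r) / 2 := by gcongr <;> [exact ha i; exact hb i]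
        _ = r := by ring
    | inr i =>
      calc ‖(b i - a i) * Complex.I / 2‖ = ‖b i - a i‖ / 2 := by
            rw [norm_div, norm_mul, Complex.norm_I, mul_one]; norm_num
        _ ≤ (‖b i‖ + ‖a i‖) / 2 := by gcongr; exact norm_sub_le _ _
        _ < (r + r) / 2 := by gcongr <;> [exact hb i; exact ha i]
        _ = r := by ring
  have hmx : m x = p := by
    apply Prod.ext
    · funext i
      show z₀ i + (a i + b i) / 2 + Complex.I * ((b i - a i) * Complex.I / 2) = p.1 i
      have hai : a i = p.1 i - z₀ i := rfl
      linear_combination ((b i - a i) / 2) * Complex.I_mul_I + hai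
    · funext i
      show (starRingEnd ℂ) (z₀ i) + (a i + b i) / 2
          - Complex.I * ((b i - a i) * Complex.I / 2) = p.2 i
      have hbi : b i = p.2 i - (starRingEnd ℂ) (z₀ i) := rfl
      linear_combination (-(b i - a i) / 2) * Complex.I_mul_I + hbi
  rw [← hmx]
  exact hΨ x hxball

/-- Identity theorem: a function holomorphic on `U × Ū` (with `U ⊆ ℂⁿ` connected open and
`Ū` its conjugate domain) that vanishes on the totally real diagonal `{(z, conj z) : z ∈ U}`
vanishes identically on `U × Ū`. -/
theorem eq_zero_of_vanishing_on_diagonal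
    (n : ℕ) (hn : 1 ≤ n) (U : Set (Fin n → ℂ))
    (hUopen : IsOpen U) (hUconn : IsConnected U)
    (φ : (Fin n → ℂ) × (Fin n → ℂ) → ℂ)
    (hφ : DifferentiableOn ℂ φ
      (U ×ˢ ((fun z : Fin n → ℂ => fun i => (starRingEnd ℂ) (z i)) '' U)))
    (h0 : ∀ z ∈ U, φ (z, fun i => (starRingEnd ℂ) (z i)) = 0) :
    ∀ p ∈ U ×ˢ ((fun z : Fin n → ℂ => fun i => (starRingEnd ℂ) (z i)) '' U), φ p = 0 := by
  set κ : (Fin n → ℂ) → (Fin n → ℂ) := fun z => fun i => (starRingEnd ℂ) (z i) with hκ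
  set S : Set ((Fin n → ℂ) × (Fin n → ℂ)) := U ×ˢ (κ '' U) with hS
  have hκcont : Continuous κ :=
    continuous_pi fun i => Complex.continuous_conj.comp (continuous_apply i)
  have hκκ : ∀ z, κ (κ z) = z := fun z => funext fun i => Complex.conj_conj _
  have hUbar_open : IsOpen (κ '' U) := by
    have : κ '' U = κ ⁻¹' U := by
      ext w
      constructor
      · rintro ⟨z, hz, rfl⟩; simpa [Set.mem_preimage, hκκ] using hz
      · intro hw; exact ⟨κ w, hw, hκκ w⟩
    rw [this]
    exact hUopen.preimage hκcont
  have hSopen : IsOpen S := hUopen.prod hUbar_open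
  have hSconn : IsPreconnected S :=
    (hUconn.prod (hUconn.image κ hκcont.continuousOn)).isPreconnected
  -- the set where φ vanishes near the point
  set W : Set ((Fin n → ℂ) × (Fin n → ℂ)) := {p | ∀ᶠ y in nhds p, φ y = 0} with hW
  have hWopen : IsOpen W := isOpen_setOf_eventually_nhds
  -- W is nonempty inside S
  obtain ⟨z₀, hz₀⟩ := hUconn.nonempty
  obtain ⟨r₀, hr₀, hloc⟩ := local_vanish hUopen hφ h0 hz₀
  have hp₀S : (z₀, κ z₀) ∈ S := Set.mem_prod.2 ⟨hz₀, ⟨z₀, hz₀, rfl⟩⟩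
  have hp₀W : (z₀, κ z₀) ∈ W := by
    have : ∀ᶠ y in nhds (z₀, κ z₀), φ y = 0 := by
      filter_upwards [ball_mem_nhds _ hr₀] with y hy
      exact hloc y hy
    exact this
  -- key: points of S not in W are not in closure of W
  have hkey : ∀ p ∈ S, p ∉ W → p ∉ closure W := by
    intro p hp hpW hpcl
    obtain ⟨ρ, hρ, hballS⟩ := Metric.isOpen_iff.1 hSopen p hp
    obtain ⟨q, hqW, hpq⟩ := Metric.mem_closure_iff.1 hpcl (ρ/2) (by positivity)
    have hballq : ball q (ρ/2) ⊆ S := by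
      intro y hy
      apply hballS
      rw [mem_ball] at hy ⊢
      calc dist y p ≤ dist y q + dist q p := dist_triangle _ _ _
        _ < ρ/2 + ρ/2 := add_lt_add hy (by rw [dist_comm]; exact hpq)
        _ = ρ := by ring
    have hφq : DifferentiableOn ℂ φ (ball q (ρ/2)) := hφ.mono hballq
    have := prop_ball (by positivity : (0:ℝ) < ρ/2) hφq hqW
    apply hpW
    have hmem : p ∈ ball q (ρ/2) := mem_ball.2 hpq
    have : ∀ᶠ y in nhds p, φ y = 0 := by
      filter_upwards [isOpen_ball.mem_nhds hmem] with y hy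
      exact prop_ball (by positivity : (0:ℝ) < ρ/2) hφq hqW y hy
    exact this
  -- connectedness argument
  have hsub : S ⊆ W ∪ (closure W)ᶜ := by
    intro p hp
    by_cases h : p ∈ W
    · exact Or.inl h
    · exact Or.inr (hkey p hp h)
  have hclosed_empty : ¬ (S ∩ (closure W)ᶜ).Nonempty := by
    intro hne
    obtain ⟨x, hxS, hx⟩ := hSconn W (closure W)ᶜ hWopen (isClosed_closure.isOpen_compl)
      hsub ⟨(z₀, κ z₀), hp₀S, hp₀W⟩ hne
    exact hx.2 (subset_closure hx.1)
  intro p hp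
  have hpW : p ∈ W := by
    by_contra h
    exact hclosed_empty ⟨p, hp, hkey p hp h⟩
  exact hpW.self_of_nhds
end

section
/- Let n ≥ 1 and let U ⊆ ℂⁿ be a connected open set, and set Ū := {conj(z) : z ∈ U}. If φ₁ and φ₂ are functions ℂⁿ × ℂⁿ → ℂ that are both holomorphic on the open set U × Ū and satisfy φ₁(z, conj(z)) = φ₂(z, conj(z)) for every z ∈ U, then φ₁ = φ₂ on all of U × Ū. In particular, a function on the totally real diagonal {(z, conj(z)) : z ∈ U} has at most one holomorphic extension to U × Ū. -/
open Metric Filter Topology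

lemma slice_zero {ι : Type*} [Fintype ι] [DecidableEq ι]
    (c : ι → ℂ) {s : ℝ} (hs : 0 < s)
    (f : (ι → ℂ) → ℂ) (hf : DifferentiableOn ℂ f (ball c s))
    (P : ι → Set ℂ) (hPsub : ∀ i, P i ⊆ ball (c i) s)
    (hPacc : ∀ i, ∃ z₀ ∈ ball (c i) s, ∃ᶠ z in 𝓝[≠] z₀, z ∈ P i)
    (h0 : ∀ x ∈ ball c s, (∀ i, x i ∈ P i) → f x = 0) :
    ∀ x ∈ ball c s, f x = 0 := by
  have hball : ∀ x : ι → ℂ, x ∈ ball c s ↔ ∀ i, x i ∈ ball (c i) s := by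
    intro x
    rw [ball_pi _ hs]
    exact Set.mem_univ_pi
  suffices H : ∀ t : Finset ι, ∀ x ∈ ball c s, (∀ i, i ∉ t → x i ∈ P i) → f x = 0 by
    intro x hx
    exact H Finset.univ x hx (fun i hi => absurd (Finset.mem_univ i) hi)
  intro t
  induction t using Finset.induction_on with
  | empty =>
    intro x hx h
    exact h0 x hx fun i => h i (Finset.notMem_empty i)
  | @insert k t hk IH =>
    intro x hx hcond
    have hupd : ∀ ζ ∈ ball (c k) s, Function.update x k ζ ∈ ball c s := by
      intro ζ hζ
      rw [hball]
      intro i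
      rcases eq_or_ne i k with rfl | hik
      · simpa using hζ
      · rw [Function.update_of_ne hik]
        exact (hball x).1 hx i
    have hud : Differentiable ℂ (Function.update x k) :=
      fun ζ => (hasFDerivAt_update x ζ).differentiableAt
    have hgdiff : DifferentiableOn ℂ (f ∘ Function.update x k) (ball (c k) s) :=
      hf.comp hud.differentiableOn hupd
    have hgan : AnalyticOnNhd ℂ (f ∘ Function.update x k) (ball (c k) s) :=
      hgdiff.analyticOnNhd isOpen_ball
    obtain ⟨z₀, hz₀, hfreq⟩ := hPacc k
    have hzero : ∀ ζ ∈ P k, (f ∘ Function.update x k) ζ = 0 := by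
      intro ζ hζ
      apply IH (Function.update x k ζ) (hupd ζ (hPsub k hζ))
      intro i hi
      rcases eq_or_ne i k with rfl | hik
      · rwa [Function.update_self]
      · rw [Function.update_of_ne hik]
        exact hcond i fun hmem => ((Finset.mem_insert.mp hmem).elim hik hi)
    have heq : Set.EqOn (f ∘ Function.update x k) 0 (ball (c k) s) :=
      hgan.eqOn_zero_of_preconnected_of_frequently_eq_zero (convex_ball _ _).isPreconnected
        hz₀ (hfreq.mono fun z hz => hzero z hz)
    have hxk : x k ∈ ball (c k) s := (hball x).1 hx k
    simpa [Function.update_eq_self] using heq hxk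

lemma conj_add_mul_I {u v : ℂ} (hu : u.im = 0) (hv : v.im = 0) :
    (starRingEnd ℂ) (u + Complex.I * v) = u - Complex.I * v := by
  apply Complex.ext <;>
    simp [Complex.add_re, Complex.add_im, Complex.sub_re, Complex.sub_im, Complex.mul_re,
      Complex.mul_im, hu, hv]

/-- Uniqueness of holomorphic extensions from the totally real diagonal: two functions
holomorphic on `U × Ū` (with `U ⊆ ℂⁿ` connected open and `Ū` its conjugate domain) that
agree on the diagonal `{(z, conj z) : z ∈ U}` agree on all of `U × Ū`. -/
theorem eq_of_eq_on_diagonal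
    (n : ℕ) (hn : 1 ≤ n) (U : Set (Fin n → ℂ))
    (hUopen : IsOpen U) (hUconn : IsConnected U)
    (φ₁ φ₂ : (Fin n → ℂ) × (Fin n → ℂ) → ℂ)
    (hφ₁ : DifferentiableOn ℂ φ₁
      (U ×ˢ ((fun z : Fin n → ℂ => fun i => (starRingEnd ℂ) (z i)) '' U)))
    (hφ₂ : DifferentiableOn ℂ φ₂
      (U ×ˢ ((fun z : Fin n → ℂ => fun i => (starRingEnd ℂ) (z i)) '' U)))
    (h0 : ∀ z ∈ U, φ₁ (z, fun i => (starRingEnd ℂ) (z i)) =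
      φ₂ (z, fun i => (starRingEnd ℂ) (z i))) :
    ∀ p ∈ U ×ˢ ((fun z : Fin n → ℂ => fun i => (starRingEnd ℂ) (z i)) '' U),
      φ₁ p = φ₂ p := by
  classical
  set σ : (Fin n → ℂ) → (Fin n → ℂ) := fun z i => (starRingEnd ℂ) (z i) with hσdef
  set V : Set ((Fin n → ℂ) × (Fin n → ℂ)) := U ×ˢ (σ '' U) with hVdef
  have hσc : Continuous σ :=
    continuous_pi fun i => Complex.continuous_conj.comp (continuous_apply i)
  have hσinv : Function.Involutive σ := by
    intro z; funext i; simp [σ]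
  have hUbaropen : IsOpen (σ '' U) := by
    rw [Set.image_eq_preimage_of_inverse hσinv hσinv]
    exact hUopen.preimage hσc
  have hVopen : IsOpen V := hUopen.prod hUbaropen
  set ψ : (Fin n → ℂ) × (Fin n → ℂ) → ℂ := fun p => φ₁ p - φ₂ p with hψdef
  have hψ : DifferentiableOn ℂ ψ V := hφ₁.sub hφ₂
  -- the complexification linear change of variables
  set Φ : ((Fin n ⊕ Fin n) → ℂ) → (Fin n → ℂ) × (Fin n → ℂ) :=
    fun x => (fun i => x (Sum.inl i) + Complex.I * x (Sum.inr i),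
              fun i => x (Sum.inl i) - Complex.I * x (Sum.inr i)) with hΦdef
  set Ψ : (Fin n → ℂ) × (Fin n → ℂ) → ((Fin n ⊕ Fin n) → ℂ) :=
    fun p => Sum.elim (fun i => (p.1 i + p.2 i) / 2)
      (fun i => (p.1 i - p.2 i) / (2 * Complex.I)) with hΨdef
  have hI : (2 * Complex.I) ≠ 0 := by simp [Complex.I_ne_zero]
  have hΦΨ : ∀ p, Φ (Ψ p) = p := by
    intro p
    apply Prod.ext <;> · funext i; simp only [Φ, Ψ, Sum.elim_inl, Sum.elim_inr]; field_simp; ring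
  have hΨΦ : ∀ x, Ψ (Φ x) = x := by
    intro x
    funext j
    cases j with
    | inl i => simp only [Φ, Ψ, Sum.elim_inl]; ring
    | inr i =>
      simp only [Φ, Ψ, Sum.elim_inr]
      field_simp
      ring
  have hΦc : Continuous Φ := by
    apply Continuous.prodMk <;>
      exact continuous_pi fun i => by fun_prop
  have hΨc : Continuous Ψ := by
    apply continuous_pi
    intro j
    cases j with
    | inl i => exact (((continuous_apply i).comp continuous_fst).add
        ((continuous_apply i).comp continuous_snd)).div_const _
    | inr i => exact (((continuous_apply i).comp continuous_fst).sub
        ((continuous_apply i).comp continuous_snd)).div_const _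
  have hΦdiff : Differentiable ℂ Φ := by
    apply Differentiable.prodMk <;>
      exact differentiable_pi.2 fun i => by fun_prop
  set F : ((Fin n ⊕ Fin n) → ℂ) → ℂ := fun x => ψ (Φ x) with hFdef
  have hF : DifferentiableOn ℂ F (Φ ⁻¹' V) :=
    hψ.comp hΦdiff.differentiableOn (fun x hx => hx)
  have hWopen : IsOpen (Φ ⁻¹' V) := hVopen.preimage hΦc
  -- the set where ψ vanishes locally
  set Z : Set ((Fin n → ℂ) × (Fin n → ℂ)) := {p | ∀ᶠ q in 𝓝 p, ψ q = 0} with hZdef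
  have hZopen : IsOpen Z := isOpen_setOf_eventually_nhds
  -- key local fact near any point of Z: full polydiscs vanish; gives closedness
  have hclose : closure Z ∩ V ⊆ Z := by
    rintro p ⟨hpcl, hpV⟩
    have hpW : Ψ p ∈ Φ ⁻¹' V := by
      simp only [Set.mem_preimage, hΦΨ p]; exact hpV
    obtain ⟨r, hr, hrsub⟩ := Metric.isOpen_iff.1 hWopen (Ψ p) hpW
    have hr2 : 0 < r / 2 := by positivity
    have hnb : Ψ ⁻¹' (ball (Ψ p) (r / 2)) ∈ 𝓝 p :=
      hΨc.continuousAt.preimage_mem_nhds (isOpen_ball.mem_nhds (mem_ball_self hr2))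
    obtain ⟨q, hqnb, hqZ⟩ := (mem_closure_iff_nhds.1 hpcl _ hnb)
    have hqball : Ψ q ∈ ball (Ψ p) (r / 2) := hqnb
    have hFq : ∀ᶠ y in 𝓝 (Ψ q), F y = 0 := by
      have ht : Filter.Tendsto Φ (𝓝 (Ψ q)) (𝓝 q) := by
        have := hΦc.continuousAt (x := Ψ q)
        rwa [ContinuousAt, hΦΨ q] at this
      exact ht.eventually hqZ
    obtain ⟨ε, hε, hεsub⟩ := Metric.eventually_nhds_iff.1 hFq
    have hε' : 0 < min ε (r / 2) := lt_min hε hr2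
    have hsub2 : ball (Ψ q) (r / 2) ⊆ Φ ⁻¹' V := by
      intro y hy
      apply hrsub
      have : dist y (Ψ p) ≤ dist y (Ψ q) + dist (Ψ q) (Ψ p) := dist_triangle _ _ _
      have h2 := mem_ball.1 hy
      have h3 := mem_ball.1 hqball
      exact mem_ball.2 (by linarith)
    have hvanish : ∀ x ∈ ball (Ψ q) (r / 2), F x = 0 := by
      apply slice_zero (Ψ q) hr2 F (hF.mono hsub2)
        (fun i => ball ((Ψ q) i) (min ε (r / 2)))
      · intro i
        exact ball_subset_ball (min_le_right _ _)
      · intro i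
        refine ⟨(Ψ q) i, mem_ball_self hr2, ?_⟩
        have : ball ((Ψ q) i) (min ε (r / 2)) ∈ 𝓝[≠] ((Ψ q) i) :=
          mem_nhdsWithin_of_mem_nhds (isOpen_ball.mem_nhds (mem_ball_self hε'))
        exact Filter.Eventually.frequently (Filter.eventually_of_mem this fun z hz => hz)
      · intro x hx hxi
        apply hεsub
        have : x ∈ ball (Ψ q) (min ε (r / 2)) := by
          rw [ball_pi _ hε']
          exact fun i _ => hxi i
        exact lt_of_lt_of_le (mem_ball.1 this) (min_le_left _ _)
    -- conclude p ∈ Z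
    have hnb2 : Ψ ⁻¹' (ball (Ψ q) (r / 2)) ∈ 𝓝 p :=
      hΨc.continuousAt.preimage_mem_nhds (isOpen_ball.mem_nhds (by
        rw [mem_ball, dist_comm]; exact mem_ball.1 hqball))
    filter_upwards [hnb2] with p' hp'
    have h2 : ψ (Φ (Ψ p')) = 0 := hvanish (Ψ p') hp'
    rwa [hΦΨ p'] at h2
  -- Z contains a diagonal point
  obtain ⟨a, ha⟩ := hUconn.nonempty
  set c : (Fin n ⊕ Fin n) → ℂ :=
    Sum.elim (fun i => ((a i).re : ℂ)) (fun i => ((a i).im : ℂ)) with hcdef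
  have hΦc_eq : Φ c = (a, σ a) := by
    apply Prod.ext <;> funext i <;>
      · simp only [Φ, c, Sum.elim_inl, Sum.elim_inr, σ]
        apply Complex.ext <;> simp
  have haV : (a, σ a) ∈ V := ⟨ha, ⟨a, ha, rfl⟩⟩
  have hcW : c ∈ Φ ⁻¹' V := by simpa [Set.mem_preimage, hΦc_eq] using haV
  obtain ⟨s, hs, hssub⟩ := Metric.isOpen_iff.1 hWopen c hcW
  have hcreal : ∀ j, (c j).im = 0 := by
    intro j
    cases j <;> simp [c]
  have hFlocal : ∀ x ∈ ball c s, F x = 0 := by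
    apply slice_zero c hs F (hF.mono hssub)
      (fun j => {z ∈ ball (c j) s | z.im = 0})
    · intro j z hz
      exact hz.1
    · intro j
      refine ⟨c j, mem_ball_self hs, ?_⟩
      have htt : Filter.Tendsto (fun m : ℕ => c j + ((1 / (m + 1) : ℝ) : ℂ)) atTop
          (𝓝 (c j)) := by
        have h1 : Filter.Tendsto (fun m : ℕ => (1 / (m + 1) : ℝ)) atTop (𝓝 0) :=
          tendsto_one_div_add_atTop_nhds_zero_nat
        have h2 : Filter.Tendsto (fun m : ℕ => ((1 / (m + 1) : ℝ) : ℂ)) atTop (𝓝 0) := by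
          have := (Complex.continuous_ofReal.tendsto 0).comp h1
          simpa [Function.comp_def] using this
        simpa using tendsto_const_nhds.add h2
      have hne : ∀ m : ℕ, c j + ((1 / (m + 1) : ℝ) : ℂ) ≠ c j := by
        intro m h
        have : ((1 / (m + 1) : ℝ) : ℂ) = 0 := by
          have := congrArg (· - c j) h
          simpa using this
        rw [Complex.ofReal_eq_zero] at this
        have : (1 : ℝ) / (m + 1) > 0 := by positivity
        linarith [this]
      have htt' : Filter.Tendsto (fun m : ℕ => c j + ((1 / (m + 1) : ℝ) : ℂ)) atTop
          (𝓝[≠] (c j)) := by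
        apply tendsto_nhdsWithin_of_tendsto_nhds_of_eventually_within _ htt
        exact Filter.Eventually.of_forall fun m => hne m
      apply htt'.frequently
      have hev : ∀ᶠ m : ℕ in atTop, c j + ((1 / (m + 1) : ℝ) : ℂ) ∈
          {z ∈ ball (c j) s | z.im = 0} := by
        have hball : ∀ᶠ m : ℕ in atTop, c j + ((1 / (m + 1) : ℝ) : ℂ) ∈ ball (c j) s := by
          have : ∀ᶠ m : ℕ in atTop, dist (c j + ((1 / (m + 1) : ℝ) : ℂ)) (c j) < s := by
            have := (Metric.tendsto_nhds.1 htt) s hs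
            exact this
          exact this
        filter_upwards [hball] with m hm
        refine ⟨hm, ?_⟩
        simp [Complex.add_im, hcreal j]
      exact hev.frequently
    · intro x hx hxP
      have hreal : ∀ j, (x j).im = 0 := fun j => (hxP j).2
      have hxV : Φ x ∈ V := hssub hx
      set z : Fin n → ℂ := fun i => x (Sum.inl i) + Complex.I * x (Sum.inr i) with hzdef
      have hΦx : Φ x = (z, fun i => (starRingEnd ℂ) (z i)) := by
        apply Prod.ext
        · rfl
        · funext i
          simp only [Φ]
          rw [hzdef]
          exact (conj_add_mul_I (hreal (Sum.inl i)) (hreal (Sum.inr i))).symm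
      have hzU : z ∈ U := by
        have := hxV.1
        rwa [show (Φ x).1 = z from rfl] at this
      show ψ (Φ x) = 0
      rw [hΦx, hψdef]
      simp only
      rw [h0 z hzU, sub_self]
  have haZ : (a, σ a) ∈ Z := by
    have hnb : Ψ ⁻¹' (ball c s) ∈ 𝓝 (a, σ a) := by
      apply hΨc.continuousAt.preimage_mem_nhds
      apply isOpen_ball.mem_nhds
      have : Ψ (a, σ a) = c := by rw [← hΦc_eq, hΨΦ]
      rw [this]
      exact mem_ball_self hs
    filter_upwards [hnb] with p' hp'
    have h2 : ψ (Φ (Ψ p')) = 0 := hFlocal (Ψ p') hp'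
    rwa [hΦΨ p'] at h2
  -- connectivity
  have hUbarconn : IsConnected (σ '' U) := hUconn.image σ hσc.continuousOn
  have hVconn : IsPreconnected V := hUconn.isPreconnected.prod hUbarconn.isPreconnected
  have hVZ : V ⊆ Z :=
    hVconn.subset_of_closure_inter_subset hZopen ⟨(a, σ a), haV, haZ⟩ hclose
  intro p hp
  have : ψ p = 0 := (hVZ hp).self_of_nhds
  simpa [hψdef, sub_eq_zero] using this
end

section
/- Let n ≥ 1 and let M be an n × n complex matrix that is symmetric (Mᵀ = M) and whose imaginary part is positive definite, i.e. the real symmetric matrix Im M, with entries (Im M)_{ij} = Im(M_{ij}), is positive definite as a real quadratic form. Then M is invertible (equivalently, det M ≠ 0). -/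
/-- A symmetric complex matrix whose imaginary part is positive definite
(i.e. a point of the Siegel upper half space) is invertible, equivalently its
determinant is nonzero. -/
theorem isUnit_of_symm_posDef_im
    (n : ℕ) (hn : 1 ≤ n) (M : Matrix (Fin n) (Fin n) ℂ)
    (hsymm : M.transpose = M)
    (hpos : (Matrix.PosDef (fun i j => (M i j).im : Matrix (Fin n) (Fin n) ℝ))) :
    IsUnit M ∧ M.det ≠ 0 := by
  set B : Matrix (Fin n) (Fin n) ℝ := fun i j => (M i j).im with hB
  suffices hdet : M.det ≠ 0 by
    exact ⟨(Matrix.isUnit_iff_isUnit_det M).2 (isUnit_iff_ne_zero.2 hdet), hdet⟩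
  intro hdet
  obtain ⟨v, hv, hMv⟩ := Matrix.exists_mulVec_eq_zero_iff.2 hdet
  set a : Fin n → ℝ := fun i => (v i).re with ha
  set b : Fin n → ℝ := fun i => (v i).im with hb
  have hsym : ∀ i j, M j i = M i j := fun i j => congrFun (congrFun hsymm i) j
  have hzero : dotProduct (star v) (M.mulVec v) = 0 := by
    rw [hMv, dotProduct_zero]
  -- compute the imaginary part of the zero quantity
  have key : (dotProduct (star v) (M.mulVec v)).im
      = dotProduct a (B.mulVec a) + dotProduct b (B.mulVec b) := by
    have lhs : (dotProduct (star v) (M.mulVec v)).im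
        = ∑ i, ∑ j, ((starRingEnd ℂ (v i)) * (M i j * v j)).im := by
      simp [dotProduct, Matrix.mulVec, Complex.im_sum, Finset.mul_sum]
    rw [lhs]
    have h2 : (2 : ℝ) * (∑ i, ∑ j, ((starRingEnd ℂ (v i)) * (M i j * v j)).im)
        = 2 * (dotProduct a (B.mulVec a) + dotProduct b (B.mulVec b)) := by
      have swap : (∑ i, ∑ j, ((starRingEnd ℂ (v i)) * (M i j * v j)).im)
          = ∑ i, ∑ j, ((starRingEnd ℂ (v j)) * (M j i * v i)).im := Finset.sum_comm
      calc (2 : ℝ) * (∑ i, ∑ j, ((starRingEnd ℂ (v i)) * (M i j * v j)).im)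
          = (∑ i, ∑ j, ((starRingEnd ℂ (v i)) * (M i j * v j)).im)
            + ∑ i, ∑ j, ((starRingEnd ℂ (v j)) * (M j i * v i)).im := by
              rw [← swap]; ring
        _ = ∑ i, ∑ j, (((starRingEnd ℂ (v i)) * (M i j * v j)).im
            + ((starRingEnd ℂ (v j)) * (M j i * v i)).im) := by
              rw [← Finset.sum_add_distrib]
              exact Finset.sum_congr rfl fun i _ => (Finset.sum_add_distrib).symm
        _ = ∑ i, ∑ j, 2 * (B i j * (a i * a j + b i * b j)) := by
              refine Finset.sum_congr rfl fun i _ => Finset.sum_congr rfl fun j _ => ?_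
              rw [hsym i j]
              simp only [Complex.mul_im, Complex.mul_re, Complex.conj_re, Complex.conj_im,
                hB, ha, hb]
              ring
        _ = 2 * (dotProduct a (B.mulVec a) + dotProduct b (B.mulVec b)) := by
              have expand : 2 * (dotProduct a (B.mulVec a)
                  + dotProduct b (B.mulVec b))
                  = ∑ i, ∑ j, (2 * (a i * (B i j * a j)) + 2 * (b i * (B i j * b j))) := by
                rw [mul_add]
                simp only [dotProduct, Matrix.mulVec, Finset.mul_sum]
                rw [← Finset.sum_add_distrib]
                exact Finset.sum_congr rfl fun i _ => by rw [← Finset.sum_add_distrib]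
              rw [expand]
              exact Finset.sum_congr rfl fun i _ => Finset.sum_congr rfl fun j _ => by ring
    linarith
  rw [hzero] at key
  -- positivity
  have hab : a ≠ 0 ∨ b ≠ 0 := by
    by_contra h
    push_neg at h
    apply hv
    funext i
    have h1 := congrFun h.1 i
    have h2 := congrFun h.2 i
    exact Complex.ext h1 h2
  have haa : 0 ≤ dotProduct a (B.mulVec a) := by
    rcases eq_or_ne a 0 with h | h
    · simp [h]
    · exact le_of_lt (by simpa using hpos.dotProduct_mulVec_pos h)
  have hbb : 0 ≤ dotProduct b (B.mulVec b) := by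
    rcases eq_or_ne b 0 with h | h
    · simp [h]
    · exact le_of_lt (by simpa using hpos.dotProduct_mulVec_pos h)
  have hpos' : 0 < dotProduct a (B.mulVec a) + dotProduct b (B.mulVec b) := by
    rcases hab with h | h
    · have := hpos.dotProduct_mulVec_pos h; simp only [star_trivial] at this; linarith
    · have := hpos.dotProduct_mulVec_pos h; simp only [star_trivial] at this; linarith
  simp only [Complex.zero_im] at key
  linarith
end
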